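/- Let K be an algebraically closed field of characteristic 0, let d ≥ 2, and let W_d be the K-vector space of binary forms of degree d in x, y. Fix O ∈ W_d, O ≠ 0, not a scalar multiple of ℓ^d for any linear form ℓ. Let V ⊆ W_d be any K-linear subspace with O ∈ V. Let U = span_K{ ℓ^d : ℓ a linear form with ℓ^d ∈ V } and let s = dim_K((U + K·O)/K·O). Then there exist an integer r ≤ (d − 1) + s and linear forms ℓ₁, …, ℓ_r such that V ⊆ span_K{ℓ₁^d, …, ℓ_r^d} + K·O. -/

import Mathlib

set_option linter.unusedSectionVars false
open MvPolynomial Submodule Matrix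
noncomputable section


def IsLinForm {K : Type*} [CommSemiring K] (l : MvPolynomial (Fin 2) K) : Prop :=
  l ≠ 0 ∧ l.IsHomogeneous 1

namespace SRBP

variable {K : Type*} [Field K] [CharZero K]

/-- exponent finsupp of the monomial `x^(d-i) y^i` -/
def D (d : ℕ) (i : Fin (d + 1)) : Fin 2 →₀ ℕ :=
  Finsupp.single 0 (d - (i : ℕ)) + Finsupp.single 1 (i : ℕ)

lemma D_apply0 (d : ℕ) (i : Fin (d + 1)) : D d i 0 = d - (i : ℕ) := by
  simp [D, Finsupp.single_apply]

lemma D_apply1 (d : ℕ) (i : Fin (d + 1)) : D d i 1 = (i : ℕ) := by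
  simp [D, Finsupp.single_apply]

lemma D_inj (d : ℕ) : Function.Injective (D d) := by
  intro i j h
  have := congrArg (fun m => m 1) h
  simp only [D_apply1] at this
  exact Fin.ext this

lemma D_eq_iff (d : ℕ) (i : Fin (d + 1)) (m : Fin 2 →₀ ℕ) :
    D d i = m ↔ (m 0 = d - (i : ℕ) ∧ m 1 = (i : ℕ)) := by
  constructor
  · rintro rfl; exact ⟨D_apply0 d i, D_apply1 d i⟩
  · rintro ⟨h0, h1⟩
    ext a
    match a with
    | 0 => rw [D_apply0, h0]
    | 1 => rw [D_apply1, h1]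

/-- The coordinate map on binary forms of degree `d`. -/
def Phi (K : Type*) [Field K] (d : ℕ) : MvPolynomial (Fin 2) K →ₗ[K] (Fin (d + 1) → K) :=
  LinearMap.pi fun i => lcoeff K (D d i)

omit [CharZero K] in
lemma Phi_apply (d : ℕ) (f : MvPolynomial (Fin 2) K) (i : Fin (d + 1)) :
    Phi K d f i = coeff (D d i) f := rfl

lemma support_sum_eq {m : Fin 2 →₀ ℕ} : (∑ a ∈ m.support, m a) = m 0 + m 1 := by
  rw [Finset.sum_subset (Finset.subset_univ m.support)]
  · exact Fin.sum_univ_two m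
  · intro x _ hx
    simpa using (Finsupp.notMem_support_iff.mp hx)

lemma homog_as_sum {d : ℕ} {f : MvPolynomial (Fin 2) K} (hf : f.IsHomogeneous d) :
    (∑ i : Fin (d + 1), monomial (D d i) (Phi K d f i)) = f := by
  apply MvPolynomial.ext
  intro m
  rw [coeff_sum]
  by_cases hm : ∃ i : Fin (d + 1), D d i = m
  · obtain ⟨i₀, rfl⟩ := hm
    rw [Finset.sum_eq_single i₀]
    · simp [coeff_monomial, Phi_apply]
    · intro j _ hj
      rw [coeff_monomial, if_neg]
      exact fun h => hj (D_inj d h)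
    · simp
  · push_neg at hm
    have hz : ∀ i : Fin (d + 1), coeff m (monomial (D d i) (Phi K d f i)) = 0 := by
      intro i
      rw [coeff_monomial, if_neg (hm i)]
    rw [Finset.sum_congr rfl fun i _ => hz i, Finset.sum_const_zero]
    by_contra h0
    have hdeg : (∑ a ∈ m.support, m a) = d := by
      have := hf (Ne.symm h0)
      rw [Finsupp.weight_apply] at this
      simpa [Finsupp.sum, smul_eq_mul] using this
    rw [support_sum_eq] at hdeg
    refine (hm ⟨m 1, by omega⟩) ?_
    rw [D_eq_iff]
    exact ⟨by simp; omega, by simp⟩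

lemma Phi_inj {d : ℕ} {f g : MvPolynomial (Fin 2) K} (hf : f.IsHomogeneous d)
    (hg : g.IsHomogeneous d) (h : Phi K d f = Phi K d g) : f = g := by
  rw [← homog_as_sum hf, ← homog_as_sum hg, h]

end SRBP

namespace SRBP
variable {K : Type*} [Field K] [CharZero K]

/-- the linear form `x + t y` -/
def lin (K : Type*) [Field K] (t : K) : MvPolynomial (Fin 2) K := X 0 + C t * X 1

lemma lin_isHomog (t : K) : (lin K t).IsHomogeneous 1 := by
  apply MvPolynomial.IsHomogeneous.add (isHomogeneous_X K 0)
  simpa using (isHomogeneous_C (Fin 2) t).mul (isHomogeneous_X K 1)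

lemma lin_ne_zero (t : K) : lin K t ≠ 0 := by
  intro h
  have := congrArg (coeff (Finsupp.single 0 1)) h
  rw [lin] at this
  simp only [coeff_add, coeff_zero] at this
  rw [coeff_X', if_pos rfl, coeff_C_mul, coeff_X', if_neg, mul_zero, add_zero] at this
  · exact one_ne_zero this
  · intro h'
    have := congrArg (fun m => m (0 : Fin 2)) h'
    simp [Finsupp.single_apply] at this

lemma lin_isLinForm (t : K) : IsLinForm (lin K t) := ⟨lin_ne_zero t, lin_isHomog t⟩

lemma X1_isLinForm : IsLinForm (X 1 : MvPolynomial (Fin 2) K) :=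
  ⟨X_ne_zero 1, isHomogeneous_X K 1⟩

lemma pow_isHomog {l : MvPolynomial (Fin 2) K} (hl : l.IsHomogeneous 1) (d : ℕ) :
    (l ^ d).IsHomogeneous d := by
  simpa using hl.pow d

/-- coordinate vector of `(x + t y)^d` -/
def v (K : Type*) [Field K] (d : ℕ) (t : K) : Fin (d + 1) → K :=
  fun i => (d.choose (i : ℕ) : K) * t ^ (i : ℕ)

lemma lin_pow_eq_sum (d : ℕ) (t : K) :
    lin K t ^ d = ∑ k ∈ Finset.range (d + 1),
      monomial (Finsupp.single 0 k + Finsupp.single 1 (d - k)) ((d.choose k : K) * t ^ (d - k)) := by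
  rw [lin, add_pow]
  apply Finset.sum_congr rfl
  intro k _
  rw [mul_pow, ← C_pow, X_pow_eq_monomial, X_pow_eq_monomial]
  rw [show ((d.choose k : MvPolynomial (Fin 2) K)) = C ((d.choose k : K)) from (C_eq_coe_nat (d.choose k)).symm]
  rw [C_apply, C_apply]
  rw [monomial_mul, monomial_mul, monomial_mul]
  congr 1
  · ext a; simp
  · ring

lemma Phi_lin_pow (d : ℕ) (t : K) : Phi K d (lin K t ^ d) = v K d t := by
  funext i
  rw [Phi_apply, lin_pow_eq_sum, coeff_sum]
  rw [Finset.sum_eq_single (d - (i : ℕ))]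
  · rw [coeff_monomial, if_pos]
    · have hi : (i : ℕ) ≤ d := by omega
      rw [Nat.sub_sub_self hi, Nat.choose_symm hi, v]
    · refine ((D_eq_iff d i _).mpr ?_).symm
      have hi : (i : ℕ) ≤ d := by omega
      constructor
      · simp [Finsupp.single_apply]
      · simp [Finsupp.single_apply, Nat.sub_sub_self hi]
  · intro k hk hne
    rw [coeff_monomial, if_neg]
    intro h
    have h0 := congrArg (fun m => m (0 : Fin 2)) h
    have hk' : k ≤ d := by simpa using Nat.lt_succ_iff.mp (Finset.mem_range.mp hk)
    simp only [D_apply0, Finsupp.add_apply, Finsupp.single_apply] at h0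
    simp at h0
    omega
  · intro h
    exact absurd (Finset.mem_range.mpr (by omega)) h

lemma Phi_X1_pow (d : ℕ) (i : Fin (d + 1)) :
    Phi K d ((X 1 : MvPolynomial (Fin 2) K) ^ d) i = if i = Fin.last d then 1 else 0 := by
  rw [Phi_apply, X_pow_eq_monomial, coeff_monomial]
  by_cases h : i = Fin.last d
  · subst h
    rw [if_pos, if_pos rfl]
    refine ((D_eq_iff d _ _).mpr ?_).symm
    simp [Finsupp.single_apply]
  · rw [if_neg, if_neg h]
    intro hc
    apply h
    have := congrArg (fun m => m (1 : Fin 2)) hc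
    simp only [D_apply1, Finsupp.single_apply] at this
    simp at this
    exact Fin.ext (by simpa using this.symm)


/-! ### dual polynomials and linear algebra -/

open Polynomial in
/-- dual polynomial of a coefficient functional -/
def qp (K : Type*) [Field K] (d : ℕ) (c : Fin (d + 1) → K) : Polynomial K :=
  ∑ i : Fin (d + 1), Polynomial.C (c i * (d.choose (i : ℕ) : K)) * Polynomial.X ^ (i : ℕ)

lemma qp_eval (d : ℕ) (c : Fin (d + 1) → K) (t : K) :
    (qp K d c).eval t = c ⬝ᵥ v K d t := by
  rw [qp, Polynomial.eval_finset_sum]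
  simp only [Polynomial.eval_mul, Polynomial.eval_C, Polynomial.eval_pow, Polynomial.eval_X]
  rw [dotProduct]
  apply Finset.sum_congr rfl
  intro i _
  rw [v]; ring

lemma qp_add (d : ℕ) (c e : Fin (d + 1) → K) : qp K d (c + e) = qp K d c + qp K d e := by
  rw [qp, qp, qp, ← Finset.sum_add_distrib]
  apply Finset.sum_congr rfl
  intro i _
  rw [Pi.add_apply, add_mul, map_add, add_mul]

lemma qp_smul (d : ℕ) (μ : K) (c : Fin (d + 1) → K) :
    qp K d (μ • c) = Polynomial.C μ * qp K d c := by
  rw [qp, qp, Finset.mul_sum]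
  apply Finset.sum_congr rfl
  intro i _
  rw [Pi.smul_apply, smul_eq_mul, mul_assoc, _root_.map_mul, mul_assoc]

lemma qp_coeff (d : ℕ) (c : Fin (d + 1) → K) (n : ℕ) (hn : n ≤ d) :
    (qp K d c).coeff n = c ⟨n, by omega⟩ * (d.choose n : K) := by
  rw [qp, Polynomial.finset_sum_coeff]
  rw [Finset.sum_eq_single (⟨n, by omega⟩ : Fin (d + 1))]
  · rw [Polynomial.coeff_C_mul, Polynomial.coeff_X_pow, if_pos rfl, mul_one]
  · intro j _ hj
    rw [Polynomial.coeff_C_mul, Polynomial.coeff_X_pow, if_neg, mul_zero]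
    intro h; exact hj (Fin.ext h.symm)
  · simp

lemma qp_natDegree_le (d : ℕ) (c : Fin (d + 1) → K) : (qp K d c).natDegree ≤ d := by
  apply Polynomial.natDegree_sum_le_of_forall_le
  intro i _
  apply le_trans (Polynomial.natDegree_mul_le)
  simp only [Polynomial.natDegree_C, zero_add]
  apply le_trans (Polynomial.natDegree_pow_le)
  have := i.isLt
  simp only [Polynomial.natDegree_X, mul_one]
  omega

lemma qp_coeff_top (d : ℕ) (c : Fin (d + 1) → K) :
    (qp K d c).coeff d = c (Fin.last d) := by
  rw [qp_coeff d c d le_rfl, Nat.choose_self]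
  simp [Fin.last]

lemma dot_combo {N : Type*} [Fintype N] {ι : Type*} (s : Finset ι) (c : N → K) (a : ι → K)
    (u : ι → N → K) : c ⬝ᵥ (∑ j ∈ s, a j • u j) = ∑ j ∈ s, a j * (c ⬝ᵥ u j) := by
  simp only [dotProduct, Finset.sum_apply, Pi.smul_apply, smul_eq_mul, Finset.mul_sum]
  rw [Finset.sum_comm]
  apply Finset.sum_congr rfl
  intro j _
  apply Finset.sum_congr rfl
  intro i _
  ring

lemma exists_combo (d : ℕ) (t : Fin (d + 1) → K) (ht : Function.Injective t)
    (w : Fin (d + 1) → K) : ∃ a : Fin (d + 1) → K, w = ∑ j, a j • v K d (t j) := by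
  classical
  set M : Matrix (Fin (d + 1)) (Fin (d + 1)) K := Matrix.of fun i j => v K d (t j) i with hM
  have hdet : M.det ≠ 0 := by
    have hfac : M = Matrix.diagonal (fun i : Fin (d + 1) => (d.choose (i : ℕ) : K)) *
        (Matrix.vandermonde t)ᵀ := by
      ext i j
      rw [Matrix.diagonal_mul]
      simp only [hM, Matrix.of_apply, Matrix.transpose_apply, Matrix.vandermonde_apply, v]
    rw [hfac, Matrix.det_mul, Matrix.det_transpose, Matrix.det_diagonal,
      Matrix.det_vandermonde]
    apply mul_ne_zero
    · apply Finset.prod_ne_zero_iff.mpr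
      intro i _
      have : 0 < d.choose (i : ℕ) := Nat.choose_pos (by omega)
      exact_mod_cast this.ne'
    · apply Finset.prod_ne_zero_iff.mpr
      intro i _
      apply Finset.prod_ne_zero_iff.mpr
      intro j hj
      exact sub_ne_zero_of_ne fun h => (Finset.mem_Ioi.mp hj).ne' (ht h)
  refine ⟨M⁻¹.mulVec w, ?_⟩
  have h1 : M.mulVec (M⁻¹.mulVec w) = w := by
    rw [Matrix.mulVec_mulVec, Matrix.mul_nonsing_inv M (isUnit_iff_ne_zero.mpr hdet),
      Matrix.one_mulVec]
  conv_lhs => rw [← h1]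
  funext i
  simp only [Matrix.mulVec, dotProduct, Finset.sum_apply, Pi.smul_apply, smul_eq_mul,
    hM, Matrix.of_apply]
  exact Finset.sum_congr rfl fun j _ => mul_comm _ _

/-- separation: if every functional killing `p` kills `w`, then `w ∈ p`. -/
lemma mem_of_dual {N : ℕ} (p : Submodule K (Fin N → K)) (w : Fin N → K)
    (h : ∀ c : Fin N → K, (∀ u ∈ p, c ⬝ᵥ u = 0) → c ⬝ᵥ w = 0) : w ∈ p := by
  classical
  by_contra hw
  obtain ⟨f, hf0, hfmap⟩ := p.exists_dual_map_eq_bot_of_notMem hw inferInstance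
  set c : Fin N → K := fun i => f (fun j => if i = j then 1 else 0) with hc
  have key : ∀ u : Fin N → K, c ⬝ᵥ u = f u := by
    intro u
    conv_rhs => rw [pi_eq_sum_univ u]
    rw [map_sum, dotProduct]
    apply Finset.sum_congr rfl
    intro i _
    rw [_root_.map_smul, smul_eq_mul, hc, mul_comm]
  have hann : ∀ u ∈ p, c ⬝ᵥ u = 0 := by
    intro u hu
    rw [key]
    have : f u ∈ p.map f := Submodule.mem_map_of_mem hu
    rwa [hfmap, Submodule.mem_bot] at this
  exact hf0 (by rw [← key]; exact h c hann)

/-- the drop lemma: if `O` is a combination of the `p j` with nonzero `j₀`-coefficient,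
then every `p j` lies in the span of `O` and the other `p j`'s. -/
lemma span_drop {M : Type*} [AddCommGroup M] [Module K M] {ι : Type*} [Fintype ι]
    [DecidableEq ι] (p : ι → M) (b : ι → K) (j₀ : ι) (hb : b j₀ ≠ 0) (O : M)
    (hO : O = ∑ j, b j • p j) (j : ι) :
    p j ∈ span K (insert O (p '' {i | i ≠ j₀})) := by
  by_cases hj : j = j₀
  · subst hj
    have hsum : O = b j • p j + ∑ i ∈ Finset.univ.erase j, b i • p i := by
      rw [hO, ← Finset.add_sum_erase _ _ (Finset.mem_univ j)]
    have : p j = (b j)⁻¹ • (O - ∑ i ∈ Finset.univ.erase j, b i • p i) := by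
      rw [hsum]
      rw [add_sub_cancel_right, smul_smul, inv_mul_cancel₀ hb, one_smul]
    rw [this]
    apply Submodule.smul_mem
    apply Submodule.sub_mem
    · exact subset_span (Set.mem_insert _ _)
    · apply Submodule.sum_mem
      intro i hi
      apply Submodule.smul_mem
      apply subset_span
      exact Set.mem_insert_of_mem _ ⟨i, Finset.ne_of_mem_erase hi, rfl⟩
  · exact subset_span (Set.mem_insert_of_mem _ ⟨j, hj, rfl⟩)


/-- avoidance: find a single element of `P` whose dual polynomial avoids all points of `R`. -/
lemma avoid {d : ℕ} (P : Submodule K (Fin (d + 1) → K)) (R : Finset K)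
    (h : ∀ t ∈ R, ∃ c ∈ P, (qp K d c).eval t ≠ 0) :
    ∃ c ∈ P, ∀ t ∈ R, (qp K d c).eval t ≠ 0 := by
  classical
  induction R using Finset.induction with
  | empty => exact ⟨0, P.zero_mem, fun t ht => absurd ht (Finset.notMem_empty t)⟩
  | @insert t R htR ih =>
    obtain ⟨c', hc'P, hc'⟩ := ih fun u hu => h u (Finset.mem_insert_of_mem hu)
    obtain ⟨ct, hctP, hct⟩ := h t (Finset.mem_insert_self t R)
    by_cases hgood : (qp K d c').eval t ≠ 0
    · exact ⟨c', hc'P, fun u hu => (Finset.mem_insert.mp hu).elim (fun e => e ▸ hgood)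
        (fun e => hc' u e)⟩
    · push_neg at hgood
      set bad : Finset K :=
        insert 0 (R.image fun ρ => -((qp K d c').eval ρ) / ((qp K d ct).eval ρ)) with hbad
      obtain ⟨μ, hμ⟩ := Infinite.exists_notMem_finset bad
      have hμ0 : μ ≠ 0 := fun e => hμ (e ▸ Finset.mem_insert_self 0 _)
      refine ⟨c' + μ • ct, P.add_mem hc'P (P.smul_mem μ hctP), ?_⟩
      intro u hu
      rw [qp_add, qp_smul, Polynomial.eval_add, Polynomial.eval_mul, Polynomial.eval_C]
      rcases Finset.mem_insert.mp hu with rfl | huR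
      · rw [hgood, zero_add]
        exact mul_ne_zero hμ0 hct
      · intro heq
        by_cases hz : (qp K d ct).eval u = 0
        · rw [hz, mul_zero, add_zero] at heq
          exact hc' u huR heq
        · apply hμ
          rw [hbad]
          apply Finset.mem_insert_of_mem
          apply Finset.mem_image.mpr
          refine ⟨u, huR, ?_⟩
          show -Polynomial.eval u (qp K d c') / Polynomial.eval u (qp K d ct) = μ
          rw [div_eq_iff hz]
          linear_combination -heq

variable [IsAlgClosed K]

/-- the analytic core: a base-point-free system of dual polynomials with a top-degree member
contains a member of degree `d` with no repeated roots. -/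
lemma core {d : ℕ} (hd : 2 ≤ d) (P : Submodule K (Fin (d + 1) → K))
    (hroot : ∀ t : K, ∃ c ∈ P, (qp K d c).eval t ≠ 0)
    (hinf : ∃ c ∈ P, (qp K d c).coeff d ≠ 0) :
    ∃ c ∈ P, (qp K d c).natDegree = d ∧ (qp K d c).roots.Nodup := by
  classical
  obtain ⟨c₀, hc₀P, hc₀d⟩ := hinf
  set q₀ := qp K d c₀ with hq₀
  have hq₀0 : q₀ ≠ 0 := fun e => hc₀d (by rw [e, Polynomial.coeff_zero])
  have hq₀deg : q₀.natDegree = d :=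
    le_antisymm (qp_natDegree_le d c₀) (Polynomial.le_natDegree_of_ne_zero hc₀d)
  -- a member with no common root with q₀
  obtain ⟨c₁, hc₁P, hc₁⟩ := avoid P q₀.roots.toFinset
    (fun t _ => hroot t)
  set q₁ := qp K d c₁ with hq₁
  have hnocomm : ∀ t : K, q₀.eval t = 0 → q₁.eval t ≠ 0 := by
    intro t h0
    apply hc₁
    rw [Multiset.mem_toFinset, Polynomial.mem_roots hq₀0]
    exact h0
  -- q₀ has a root since deg ≥ 1
  have hq₀degne : q₀.degree ≠ 0 := by
    rw [Polynomial.degree_eq_natDegree hq₀0, hq₀deg]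
    simp only [ne_eq, Nat.cast_eq_zero]
    omega
  obtain ⟨z, hz⟩ := IsAlgClosed.exists_root q₀ hq₀degne
  have hq₁0 : q₁ ≠ 0 := by
    intro e
    exact hnocomm z hz (by rw [e, Polynomial.eval_zero])
  -- coprime
  have hcop : IsCoprime q₀ q₁ := by
    rw [← EuclideanDomain.gcd_isUnit_iff]
    by_contra hnu
    have hg0 : EuclideanDomain.gcd q₀ q₁ ≠ 0 := by
      intro e
      rw [EuclideanDomain.gcd_eq_zero_iff] at e
      exact hq₀0 e.1
    have hgdeg : (EuclideanDomain.gcd q₀ q₁).degree ≠ 0 := by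
      intro e
      exact hnu (Polynomial.isUnit_iff_degree_eq_zero.mpr e)
    obtain ⟨ρ, hρ⟩ := IsAlgClosed.exists_root _ hgdeg
    have h0 : q₀.eval ρ = 0 :=
      Polynomial.eval_eq_zero_of_dvd_of_eval_eq_zero (EuclideanDomain.gcd_dvd_left q₀ q₁) hρ
    have h1 : q₁.eval ρ = 0 :=
      Polynomial.eval_eq_zero_of_dvd_of_eval_eq_zero (EuclideanDomain.gcd_dvd_right q₀ q₁) hρ
    exact hnocomm ρ h0 h1
  -- Wronskian nonzero
  set W := q₀ * Polynomial.derivative q₁ - Polynomial.derivative q₀ * q₁ with hW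
  have hq₀' : Polynomial.derivative q₀ ≠ 0 := by
    intro e
    have : q₀.natDegree = 0 := Polynomial.natDegree_eq_zero_of_derivative_eq_zero e
    omega
  have hW0 : W ≠ 0 := by
    intro e
    have heq : q₀ * Polynomial.derivative q₁ = Polynomial.derivative q₀ * q₁ := by
      rwa [hW, sub_eq_zero] at e
    have hdvd : q₀ ∣ Polynomial.derivative q₀ * q₁ := ⟨Polynomial.derivative q₁, heq.symm⟩
    have hdvd' : q₀ ∣ Polynomial.derivative q₀ := hcop.dvd_of_dvd_mul_right hdvd
    have : q₀.degree ≤ (Polynomial.derivative q₀).degree :=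
      Polynomial.degree_le_of_dvd hdvd' hq₀'
    exact absurd this (not_le.mpr (Polynomial.degree_derivative_lt hq₀0))
  -- choose μ avoiding bad values
  set bad : Finset K :=
    (W.roots.toFinset.image fun ρ => -(q₀.eval ρ) / (q₁.eval ρ)) ∪
      (if q₁.coeff d = 0 then ∅ else {-(q₀.coeff d) / (q₁.coeff d)}) with hbad
  obtain ⟨μ, hμ⟩ := Infinite.exists_notMem_finset bad
  set c := c₀ + μ • c₁ with hc
  set q := qp K d c with hq
  have hqeq : q = q₀ + Polynomial.C μ * q₁ := by
    rw [hq, hc, qp_add, qp_smul, hq₀, hq₁]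
  have hcoeffd : q.coeff d ≠ 0 := by
    rw [hqeq, Polynomial.coeff_add, Polynomial.coeff_C_mul]
    intro heq
    by_cases hz : q₁.coeff d = 0
    · rw [hz, mul_zero, add_zero] at heq
      exact hc₀d heq
    · apply hμ
      rw [hbad]
      apply Finset.mem_union_right
      rw [if_neg hz, Finset.mem_singleton, eq_div_iff hz]
      linear_combination heq
  have hqdeg : q.natDegree = d :=
    le_antisymm (qp_natDegree_le d c) (Polynomial.le_natDegree_of_ne_zero hcoeffd)
  have hq0 : q ≠ 0 := fun e => hcoeffd (by rw [e, Polynomial.coeff_zero])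
  refine ⟨c, P.add_mem hc₀P (P.smul_mem μ hc₁P), hqdeg, ?_⟩
  rw [Multiset.nodup_iff_count_le_one]
  intro t
  rw [Polynomial.count_roots, ← hq]
  by_contra hcount
  push_neg at hcount
  have h2 : (Polynomial.X - Polynomial.C t) ^ 2 ∣ q := by
    have := Polynomial.pow_rootMultiplicity_dvd q t
    exact dvd_trans (pow_dvd_pow _ (by omega)) this
  obtain ⟨h, hh⟩ := h2
  have hqt : q.eval t = 0 := by
    rw [hh]
    simp
  have hq't : (Polynomial.derivative q).eval t = 0 := by
    rw [hh, Polynomial.derivative_mul, Polynomial.derivative_pow]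
    simp
  -- derive contradiction
  have hq₁t : q₁.eval t ≠ 0 := by
    intro hz
    have h0t : q₀.eval t = 0 := by
      have := hqt
      rw [hqeq, Polynomial.eval_add, Polynomial.eval_mul, Polynomial.eval_C, hz,
        mul_zero, add_zero] at this
      exact this
    exact hnocomm t h0t hz
  have h0t : q₀.eval t = -(μ * q₁.eval t) := by
    have := hqt
    rw [hqeq, Polynomial.eval_add, Polynomial.eval_mul, Polynomial.eval_C] at this
    linear_combination this
  have h0't : (Polynomial.derivative q₀).eval t = -(μ * (Polynomial.derivative q₁).eval t) := by
    have := hq't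
    rw [hqeq] at this
    rw [Polynomial.derivative_add, Polynomial.derivative_C_mul, Polynomial.eval_add,
      Polynomial.eval_mul, Polynomial.eval_C] at this
    linear_combination this
  have hWt : W.eval t = 0 := by
    rw [hW, Polynomial.eval_sub, Polynomial.eval_mul, Polynomial.eval_mul, h0t, h0't]
    ring
  apply hμ
  rw [hbad]
  apply Finset.mem_union_left
  apply Finset.mem_image.mpr
  refine ⟨t, ?_, ?_⟩
  · rw [Multiset.mem_toFinset, Polynomial.mem_roots hW0]
    exact hWt
  · show -(q₀.eval t) / q₁.eval t = μ
    rw [h0t, neg_neg, mul_div_assoc, div_self hq₁t, mul_one]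


/-- annihilator of a coordinate subspace via dot product -/
def annih {N : ℕ} (S : Submodule K (Fin N → K)) : Submodule K (Fin N → K) where
  carrier := {c | ∀ u ∈ S, c ⬝ᵥ u = 0}
  add_mem' := by
    intro a b ha hb u hu
    rw [add_dotProduct, ha u hu, hb u hu, add_zero]
  zero_mem' := by
    intro u hu
    exact zero_dotProduct u
  smul_mem' := by
    intro μ a ha u hu
    rw [smul_dotProduct, ha u hu, smul_zero]

lemma mem_annih {N : ℕ} (S : Submodule K (Fin N → K)) (c : Fin N → K) :
    c ∈ annih S ↔ ∀ u ∈ S, c ⬝ᵥ u = 0 := Iff.rfl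

lemma dot_indicator_last {d : ℕ} (c : Fin (d + 1) → K) :
    c ⬝ᵥ (fun i => if i = Fin.last d then 1 else 0) = c (Fin.last d) := by
  rw [dotProduct]
  rw [Finset.sum_eq_single (Fin.last d)]
  · rw [if_pos rfl, mul_one]
  · intro j _ hj
    rw [if_neg hj, mul_zero]
  · simp

end SRBP

open SRBP in
theorem subspace_rank_bound_projected
    {K : Type*} [Field K] [IsAlgClosed K] [CharZero K] (d : ℕ) (hd : 2 ≤ d)
    (O : MvPolynomial (Fin 2) K) (hOd : O.IsHomogeneous d) (hO0 : O ≠ 0)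
    (hOC : ∀ (c : K) (l : MvPolynomial (Fin 2) K), IsLinForm l → O ≠ c • l ^ d)
    (V : Submodule K (MvPolynomial (Fin 2) K))
    (hVW : V ≤ homogeneousSubmodule (Fin 2) K d) (hOV : O ∈ V)
    (U : Submodule K (MvPolynomial (Fin 2) K))
    (hU : U = span K {g : MvPolynomial (Fin 2) K |
      ∃ l : MvPolynomial (Fin 2) K, IsLinForm l ∧ g = l ^ d ∧ g ∈ V})
    (s : ℕ)
    (hs : s = Module.finrank K
      (Submodule.map (span K ({O} : Set (MvPolynomial (Fin 2) K))).mkQ U)) :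
    ∃ r ≤ (d - 1) + s, ∃ l : Fin r → MvPolynomial (Fin 2) K, (∀ i, IsLinForm (l i)) ∧
      V ≤ span K (insert O (Set.range fun i => l i ^ d)) := by
  classical
  obtain ⟨m, rfl⟩ : ∃ m, d = m + 2 := ⟨d - 2, by omega⟩
  by_cases hB : ∃ l : MvPolynomial (Fin 2) K, IsLinForm l ∧ l ^ (m + 2) ∈ V
  · -- there is a power of a linear form in V, hence s ≥ 1
    obtain ⟨l0, hl0, hl0V⟩ := hB
    -- finite dimensionality facts
    have hWle : homogeneousSubmodule (Fin 2) K (m + 2) ≤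
        span K (Set.range fun i : Fin (m + 3) => (monomial (D (m + 2) i) (1 : K))) := by
      intro f hf
      have hsum := homog_as_sum ((mem_homogeneousSubmodule _ _).mp hf)
      rw [← hsum]
      apply sum_mem
      intro i _
      have he : monomial (D (m + 2) i) (Phi K (m + 2) f i)
          = (Phi K (m + 2) f i) • monomial (D (m + 2) i) (1 : K) := by
        rw [smul_monomial, smul_eq_mul, mul_one]
      rw [he]
      exact Submodule.smul_mem _ _ (subset_span (Set.mem_range_self i))
    have hUle : U ≤ homogeneousSubmodule (Fin 2) K (m + 2) := by
      rw [hU]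
      apply span_le.mpr
      rintro g ⟨l, hl, rfl, hgV⟩
      exact (mem_homogeneousSubmodule _ _).mpr (pow_isHomog hl.2 (m + 2))
    haveI : FiniteDimensional K
        (span K (Set.range fun i : Fin (m + 3) => (monomial (D (m + 2) i) (1 : K)))) :=
      FiniteDimensional.span_of_finite K (Set.finite_range _)
    haveI : FiniteDimensional K U :=
      Submodule.finiteDimensional_of_le (le_trans hUle hWle)
    have hl0U : l0 ^ (m + 2) ∈ U := by
      rw [hU]
      exact subset_span ⟨l0, hl0, rfl, hl0V⟩
    have hne : (span K ({O} : Set (MvPolynomial (Fin 2) K))).mkQ (l0 ^ (m + 2)) ≠ 0 := by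
      rw [Submodule.mkQ_apply, ne_eq, Submodule.Quotient.mk_eq_zero]
      intro hmem
      rw [Submodule.mem_span_singleton] at hmem
      obtain ⟨a, ha⟩ := hmem
      have hl0ne : l0 ^ (m + 2) ≠ 0 := pow_ne_zero _ hl0.1
      have ha0 : a ≠ 0 := by
        rintro rfl
        rw [zero_smul] at ha
        exact hl0ne ha.symm
      exact hOC a⁻¹ l0 hl0 (by rw [← ha, smul_smul, inv_mul_cancel₀ ha0, one_smul])
    have hs1 : 1 ≤ s := by
      set_option synthInstance.maxHeartbeats 1000000 in
      rw [hs]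
      refine Module.finrank_pos_iff_exists_ne_zero.mpr ?_
      refine ⟨⟨_, Submodule.mem_map_of_mem hl0U⟩, ?_⟩
      intro hc
      apply hne
      exact congrArg Subtype.val hc
    -- now span everything with m+2 powers plus O
    set t : Fin (m + 3) → K := fun j => ((j : ℕ) : K) with htdef
    have htinj : Function.Injective t := by
      intro a b hab
      exact Fin.ext (Nat.cast_injective hab)
    set p : Fin (m + 3) → MvPolynomial (Fin 2) K := fun j => lin K (t j) ^ (m + 2) with hpdef
    have hphomog : ∀ j, p j ∈ homogeneousSubmodule (Fin 2) K (m + 2) := fun j =>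
      (mem_homogeneousSubmodule _ _).mpr (pow_isHomog (lin_isHomog (t j)) (m + 2))
    have hrep : ∀ f : MvPolynomial (Fin 2) K, f.IsHomogeneous (m + 2) →
        ∃ b : Fin (m + 3) → K, f = ∑ j, b j • p j := by
      intro f hf
      obtain ⟨b, hb⟩ := exists_combo (m + 2) t htinj (Phi K (m + 2) f)
      refine ⟨b, ?_⟩
      apply Phi_inj hf
      · exact (mem_homogeneousSubmodule _ _).mp
          (sum_mem fun j _ => Submodule.smul_mem _ _ (hphomog j))
      · rw [map_sum, hb]
        apply Finset.sum_congr rfl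
        intro j _
        rw [_root_.map_smul]
        simp only [hpdef]
        rw [Phi_lin_pow]
    obtain ⟨b, hbO⟩ := hrep O hOd
    have hbne : ∃ j₀, b j₀ ≠ 0 := by
      by_contra hall
      push_neg at hall
      apply hO0
      rw [hbO]
      exact Finset.sum_eq_zero fun j _ => by rw [hall j, zero_smul]
    obtain ⟨j₀, hj₀⟩ := hbne
    refine ⟨m + 2, by omega, fun k => lin K (t (j₀.succAbove k)), fun k => lin_isLinForm _, ?_⟩
    have himg : p '' {i | i ≠ j₀} =
        Set.range (fun k : Fin (m + 2) => lin K (t (j₀.succAbove k)) ^ (m + 2)) := by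
      have h1 : {i : Fin (m + 3) | i ≠ j₀} = Set.range j₀.succAbove := by
        rw [Fin.range_succAbove]
        ext i
        simp
      rw [h1, ← Set.range_comp]
      rfl
    intro f hfV
    obtain ⟨bf, hbf⟩ := hrep f ((mem_homogeneousSubmodule _ _).mp (hVW hfV))
    rw [hbf]
    apply sum_mem
    intro j _
    apply Submodule.smul_mem
    have := span_drop p b j₀ hj₀ O hbO j
    rwa [himg] at this
  · -- no power of a linear form lies in V
    push_neg at hB
    replace hB : ∀ l : MvPolynomial (Fin 2) K, IsLinForm l → l ^ (m + 2) ∉ V := hB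
    set VC : Submodule K (Fin (m + 3) → K) := Submodule.map (Phi K (m + 2)) V with hVCdef
    set P : Submodule K (Fin (m + 3) → K) := annih VC with hPdef
    have hrecover : ∀ g : MvPolynomial (Fin 2) K, g.IsHomogeneous (m + 2) →
        Phi K (m + 2) g ∈ VC → g ∈ V := by
      intro g hg hgVC
      obtain ⟨f, hfV, hPhi⟩ := hgVC
      have : f = g := Phi_inj ((mem_homogeneousSubmodule _ _).mp (hVW hfV)) hg hPhi
      rwa [← this]
    have hroot : ∀ t : K, ∃ c ∈ P, (qp K (m + 2) c).eval t ≠ 0 := by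
      intro t
      by_contra hall
      push_neg at hall
      have hmem : v K (m + 2) t ∈ VC := by
        apply mem_of_dual
        intro c hc
        have hcP : c ∈ P := hc
        have := hall c hcP
        rwa [qp_eval] at this
      apply hB (lin K t) (lin_isLinForm t)
      apply hrecover _ (pow_isHomog (lin_isHomog t) (m + 2))
      rwa [Phi_lin_pow]
    have hinf : ∃ c ∈ P, (qp K (m + 2) c).coeff (m + 2) ≠ 0 := by
      by_contra hall
      push_neg at hall
      have hmem : Phi K (m + 2) ((X 1 : MvPolynomial (Fin 2) K) ^ (m + 2)) ∈ VC := by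
        apply mem_of_dual
        intro c hc
        have hcP : c ∈ P := hc
        have h1 := hall c hcP
        rw [qp_coeff_top] at h1
        have h2 : Phi K (m + 2) ((X 1 : MvPolynomial (Fin 2) K) ^ (m + 2)) =
            fun i => if i = Fin.last (m + 2) then 1 else 0 := by
          funext i
          exact Phi_X1_pow (m + 2) i
        rw [h2, dot_indicator_last, h1]
      exact hB (X 1) X1_isLinForm (hrecover _ (pow_isHomog (isHomogeneous_X K 1) (m + 2)) hmem)
    obtain ⟨c, hcP, hcdeg, hcnodup⟩ := core (by omega) P hroot hinf
    set q := qp K (m + 2) c with hqdef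
    have hq0 : q ≠ 0 := by
      intro e
      have : q.natDegree = 0 := by rw [e, Polynomial.natDegree_zero]
      omega
    have hcard : q.roots.toFinset.card = m + 2 := by
      rw [Multiset.toFinset_card_eq_card_iff_nodup.mpr hcnodup]
      have := Polynomial.splits_iff_card_roots.mp (IsAlgClosed.splits q)
      rw [this, hcdeg]
    set t : Fin (m + 2) → K :=
      fun j => ((q.roots.toFinset.equivFin.symm (Fin.cast hcard.symm j)) : K) with htdef
    have htinj : Function.Injective t := by
      intro a b hab
      have h1 := Subtype.coe_injective hab
      have h2 := q.roots.toFinset.equivFin.symm.injective h1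
      exact Fin.cast_injective _ h2
    have htroot : ∀ j, q.eval (t j) = 0 := by
      intro j
      have : t j ∈ q.roots.toFinset := (q.roots.toFinset.equivFin.symm (Fin.cast hcard.symm j)).2
      rw [Multiset.mem_toFinset, Polynomial.mem_roots hq0] at this
      exact this
    obtain ⟨t', ht'⟩ := Infinite.exists_notMem_finset q.roots.toFinset
    have ht'root : q.eval t' ≠ 0 := by
      intro e
      exact ht' (Multiset.mem_toFinset.mpr ((Polynomial.mem_roots hq0).mpr e))
    set T : Fin (m + 3) → K := Fin.snoc t t' with hTdef
    have hTcast : ∀ j : Fin (m + 2), T j.castSucc = t j := by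
      intro j
      simp [hTdef]
    have hTlast : T (Fin.last (m + 2)) = t' := by simp [hTdef]
    have hTinj : Function.Injective T := by
      intro a b hab
      rcases Fin.eq_castSucc_or_eq_last a with ⟨a', rfl⟩ | rfl <;>
        rcases Fin.eq_castSucc_or_eq_last b with ⟨b', rfl⟩ | rfl
      · rw [hTcast, hTcast] at hab
        rw [htinj hab]
      · rw [hTcast, hTlast] at hab
        exact absurd (hab ▸ Multiset.mem_toFinset.mpr
          ((Polynomial.mem_roots hq0).mpr (htroot a'))) ht'
      · rw [hTcast, hTlast] at hab
        exact absurd (hab ▸ Multiset.mem_toFinset.mpr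
          ((Polynomial.mem_roots hq0).mpr (htroot b'))) ht'
      · rfl
    set p : Fin (m + 2) → MvPolynomial (Fin 2) K := fun j => lin K (t j) ^ (m + 2) with hpdef
    have hphomog : ∀ j, p j ∈ homogeneousSubmodule (Fin 2) K (m + 2) := fun j =>
      (mem_homogeneousSubmodule _ _).mpr (pow_isHomog (lin_isHomog (t j)) (m + 2))
    -- every element of V is a combination of the p j
    have hrep : ∀ f, f ∈ V → ∃ b : Fin (m + 2) → K, f = ∑ j, b j • p j := by
      intro f hfV
      have hf : f.IsHomogeneous (m + 2) := (mem_homogeneousSubmodule _ _).mp (hVW hfV)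
      obtain ⟨a, ha⟩ := exists_combo (m + 2) T hTinj (Phi K (m + 2) f)
      have hdot : c ⬝ᵥ Phi K (m + 2) f = 0 := hcP _ (Submodule.mem_map_of_mem hfV)
      rw [ha, dot_combo] at hdot
      have hterm : ∀ j, c ⬝ᵥ v K (m + 2) (T j) = q.eval (T j) := fun j =>
        (qp_eval (m + 2) c (T j)).symm
      rw [Finset.sum_congr rfl (fun j _ => by rw [hterm j])] at hdot
      rw [Fin.sum_univ_castSucc] at hdot
      have hz : ∀ j : Fin (m + 2), a j.castSucc * q.eval (T j.castSucc) = 0 := by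
        intro j
        rw [hTcast, htroot, mul_zero]
      rw [Finset.sum_congr rfl (fun j _ => hz j), Finset.sum_const_zero, zero_add,
        hTlast] at hdot
      have halast : a (Fin.last (m + 2)) = 0 := by
        rcases mul_eq_zero.mp hdot with h1 | h2
        · exact h1
        · exact absurd h2 ht'root
      refine ⟨fun j => a j.castSucc, ?_⟩
      apply Phi_inj hf
      · exact (mem_homogeneousSubmodule _ _).mp
          (sum_mem fun j _ => Submodule.smul_mem _ _ (hphomog j))
      · rw [map_sum, ha, Fin.sum_univ_castSucc, halast, zero_smul, add_zero]
        apply Finset.sum_congr rfl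
        intro j _
        rw [_root_.map_smul]
        simp only [hpdef]
        rw [Phi_lin_pow, hTcast]
    obtain ⟨b, hbO⟩ := hrep O hOV
    have hbne : ∃ j₀, b j₀ ≠ 0 := by
      by_contra hall
      push_neg at hall
      apply hO0
      rw [hbO]
      exact Finset.sum_eq_zero fun j _ => by rw [hall j, zero_smul]
    obtain ⟨j₀, hj₀⟩ := hbne
    refine ⟨m + 1, by omega, fun k => lin K (t (j₀.succAbove k)), fun k => lin_isLinForm _, ?_⟩
    have himg : p '' {i | i ≠ j₀} =
        Set.range (fun k : Fin (m + 1) => lin K (t (j₀.succAbove k)) ^ (m + 2)) := by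
      have h1 : {i : Fin (m + 2) | i ≠ j₀} = Set.range j₀.succAbove := by
        rw [Fin.range_succAbove]
        ext i
        simp
      rw [h1, ← Set.range_comp]
      rfl
    intro f hfV
    obtain ⟨bf, hbf⟩ := hrep f hfV
    rw [hbf]
    apply sum_mem
    intro j _
    apply Submodule.smul_mem
    have := span_drop p b j₀ hj₀ O hbO j
    rwa [himg] at this
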